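/- Let Σ be an M×M real symmetric positive definite matrix and let σ² ≥ 0. If L₁ and L₂ are M×M real symmetric positive semidefinite matrices satisfying L₁ᵀ Σ L₁ + σ²·I = L₂ᵀ Σ L₂ + σ²·I, then L₁ = L₂. (In particular, the topology matrix L in the model p = Lθ + w is uniquely identified, without scaling or permutation ambiguity, from the covariance matrix Σ_p = Lᵀ Σ_θ L + σ²I of the observations.) -/

import Mathlib

open Matrix

/-- **Identifiability of the Laplacian mixing matrix (Theorem 1).**
If `S` is a symmetric positive definite `M × M` matrix, `σ² ≥ 0`, and `L₁, L₂` are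
symmetric positive semidefinite matrices with `L₁ᵀ S L₁ + σ² I = L₂ᵀ S L₂ + σ² I`,
then `L₁ = L₂`. -/
theorem laplacian_identifiable_from_covariance {M : ℕ}
    (S : Matrix (Fin M) (Fin M) ℝ) (hS : S.PosDef)
    (σ2 : ℝ) (hσ2 : 0 ≤ σ2)
    (L₁ L₂ : Matrix (Fin M) (Fin M) ℝ)
    (hL₁ : L₁.PosSemidef) (hL₂ : L₂.PosSemidef)
    (heq : L₁ᵀ * S * L₁ + σ2 • (1 : Matrix (Fin M) (Fin M) ℝ) =
           L₂ᵀ * S * L₂ + σ2 • (1 : Matrix (Fin M) (Fin M) ℝ)) :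
    L₁ = L₂ := by
  have heq0 : L₁ᵀ * S * L₁ = L₂ᵀ * S * L₂ := by
    have := congrArg (fun X => X - σ2 • (1 : Matrix (Fin M) (Fin M) ℝ)) heq
    simpa using this
  have h1 : L₁ᵀ = L₁ := by
    have := hL₁.1.eq
    rwa [conjTranspose_eq_transpose_of_trivial] at this
  have h2 : L₂ᵀ = L₂ := by
    have := hL₂.1.eq
    rwa [conjTranspose_eq_transpose_of_trivial] at this
  rw [h1, h2] at heq0
  open scoped MatrixOrder in set R := CFC.sqrt S with hRdef
  have hR : R.PosSemidef := by open scoped MatrixOrder in exact (CFC.sqrt_nonneg S).posSemidef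
  have hRH : Rᴴ = R := hR.1.eq
  have hRR : R * R = S := by open scoped MatrixOrder in exact CFC.sqrt_mul_sqrt_self S hS.posSemidef.nonneg
  -- A i := R * L i * R is PSD
  have hA1 : (R * L₁ * R).PosSemidef := by
    have := hL₁.mul_mul_conjTranspose_same R
    rwa [hRH] at this
  have hA2 : (R * L₂ * R).PosSemidef := by
    have := hL₂.mul_mul_conjTranspose_same R
    rwa [hRH] at this
  have hsq : (R * L₁ * R) ^ 2 = (R * L₂ * R) ^ 2 := by
    have e1 : (R * L₁ * R) ^ 2 = R * (L₁ * S * L₁) * R := by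
      rw [pow_two, ← hRR]; noncomm_ring
    have e2 : (R * L₂ * R) ^ 2 = R * (L₂ * S * L₂) * R := by
      rw [pow_two, ← hRR]; noncomm_ring
    rw [e1, e2, heq0]
  have hAeq : R * L₁ * R = R * L₂ * R := by open scoped MatrixOrder in exact (CFC.sq_eq_sq_iff _ _ hA1.nonneg hA2.nonneg).mp hsq
  -- R is invertible since det S ≠ 0
  have hdet : IsUnit R.det := by
    have : R.det * R.det = S.det := by rw [← det_mul, hRR]
    have hSdet : S.det ≠ 0 := hS.det_pos.ne'
    exact isUnit_iff_ne_zero.mpr (fun h => hSdet (by rw [← this, h, mul_zero]))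
  have hinv := R.invertibleOfIsUnitDet hdet
  have : L₁ * R = L₂ * R := by
    have := congrArg (fun X => R⁻¹ * X) hAeq
    simpa [Matrix.mul_assoc, Matrix.nonsing_inv_mul_cancel_left] using this
  have := congrArg (fun X => X * R⁻¹) this
  simpa [Matrix.mul_assoc, Matrix.mul_nonsing_inv_cancel_right] using this
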